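/- Let X₁, X₂, S be d×d complex matrices, and let ρ be the 2d×2d positive semidefinite matrix ρ = X*X where X is the block matrix [[X₁, S X₁],[0, X₂]]. If S is a normal matrix, then ρ is separable as a state on ℂ²⊗ℂᵈ, i.e. ρ is a sum of matrices of the form (v v*) ⊗ M with v ∈ ℂ² and M a d×d positive semidefinite matrix. -/

import Mathlib

open Matrix Kronecker ComplexOrder
set_option maxHeartbeats 1000000

/-- The 2×2 block matrix with d×d blocks, indexed by `Fin 2 × Fin d`. -/
def blk2 {d : ℕ} (A B C D : Matrix (Fin d) (Fin d) ℂ) :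
    Matrix (Fin 2 × Fin d) (Fin 2 × Fin d) ℂ :=
  fun p q => (![![A, B], ![C, D]] p.1 q.1) p.2 q.2

/-- Separability on ℂ²⊗ℂᵈ as a sum of (v v*) ⊗ M with M positive semidefinite. -/
def SepRankOne {d : ℕ} (ρ : Matrix (Fin 2 × Fin d) (Fin 2 × Fin d) ℂ) : Prop :=
  ∃ (n : ℕ) (v : Fin n → (Fin 2 → ℂ)) (M : Fin n → Matrix (Fin d) (Fin d) ℂ),
    (∀ i, (M i).PosSemidef) ∧
    ρ = ∑ i, (Matrix.vecMulVec (v i) (star (v i))) ⊗ₖ M i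

lemma normal_spectral {d : ℕ} (S : Matrix (Fin d) (Fin d) ℂ) (hS : S * Sᴴ = Sᴴ * S) :
    ∃ (U : Matrix (Fin d) (Fin d) ℂ) (μ : Fin d → ℂ),
      Uᴴ * U = 1 ∧ S = U * Matrix.diagonal μ * Uᴴ := by
  classical
  set T : EuclideanSpace ℂ (Fin d) →ₗ[ℂ] EuclideanSpace ℂ (Fin d) := Matrix.toEuclideanLin S with hT
  have hmul : ∀ (M N : Matrix (Fin d) (Fin d) ℂ),
      Matrix.toEuclideanLin (M * N) = Matrix.toEuclideanLin M * Matrix.toEuclideanLin N := by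
    intro M N
    ext x
    simp [Matrix.toEuclideanLin_apply, Matrix.mulVec_mulVec]
  have hadj : LinearMap.adjoint T = Matrix.toEuclideanLin Sᴴ :=
    (Matrix.toEuclideanLin_conjTranspose_eq_adjoint S).symm
  set A : EuclideanSpace ℂ (Fin d) →ₗ[ℂ] EuclideanSpace ℂ (Fin d) := T + LinearMap.adjoint T with hA
  set B : EuclideanSpace ℂ (Fin d) →ₗ[ℂ] EuclideanSpace ℂ (Fin d) :=
    Complex.I • (T - LinearMap.adjoint T) with hB
  have hAsym : A.IsSymmetric := by
    rw [LinearMap.isSymmetric_iff_isSelfAdjoint]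
    show star _ = _
    rw [hA, star_add, LinearMap.star_eq_adjoint, LinearMap.star_eq_adjoint,
      LinearMap.adjoint_adjoint]
    abel
  have hBsym : B.IsSymmetric := by
    rw [LinearMap.isSymmetric_iff_isSelfAdjoint]
    show star _ = _
    rw [hB, star_smul, star_sub, LinearMap.star_eq_adjoint, LinearMap.star_eq_adjoint,
      LinearMap.adjoint_adjoint]
    simp [Complex.star_def, Complex.conj_I, smul_sub, neg_sub]
    abel
  have hTT' : T * LinearMap.adjoint T = LinearMap.adjoint T * T := by
    rw [hadj, hT, ← hmul, ← hmul, hS]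
  have hC : Commute A B := by
    show A * B = B * A
    have h1 : (T + LinearMap.adjoint T) * (T - LinearMap.adjoint T)
        = T*T - T*LinearMap.adjoint T + LinearMap.adjoint T*T
          - LinearMap.adjoint T*LinearMap.adjoint T := by noncomm_ring
    have h2 : (T - LinearMap.adjoint T) * (T + LinearMap.adjoint T)
        = T*T + T*LinearMap.adjoint T - LinearMap.adjoint T*T
          - LinearMap.adjoint T*LinearMap.adjoint T := by noncomm_ring
    rw [hA, hB, mul_smul_comm, smul_mul_assoc, h1, h2, hTT']
    congr 1
    abel
  have internal0 := LinearMap.IsSymmetric.directSum_isInternal_of_commute hAsym hBsym hC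
  have fam0 := LinearMap.IsSymmetric.orthogonalFamily_eigenspace_inf_eigenspace hAsym hBsym
  set V : ℂ × ℂ → Submodule ℂ (EuclideanSpace ℂ (Fin d)) :=
    fun p => Module.End.eigenspace A p.2 ⊓ Module.End.eigenspace B p.1 with hV
  haveI : Fintype {p : ℂ × ℂ // V p ≠ ⊥} :=
    (fam0.independent).fintypeNeBotOfFiniteDimensional
  have fam := fam0.comp
    (Subtype.coe_injective : Function.Injective ((↑) : {p : ℂ × ℂ // V p ≠ ⊥} → ℂ × ℂ))
  have internal : DirectSum.IsInternal (fun i : {p : ℂ × ℂ // V p ≠ ⊥} => V i) := by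
    rw [fam.isInternal_iff]
    rw [iSup_ne_bot_subtype V, internal0.submodule_iSup_eq_top, Submodule.top_orthogonal_eq_bot]
  have hdim : Module.finrank ℂ (EuclideanSpace ℂ (Fin d)) = d := by
    simp [finrank_euclideanSpace]
  let b := internal.subordinateOrthonormalBasis hdim fam
  let pr' : Fin d → {p : ℂ × ℂ // V p ≠ ⊥} :=
    fun a => internal.subordinateOrthonormalBasisIndex hdim a fam
  let pr : Fin d → ℂ × ℂ := fun a => (pr' a : ℂ × ℂ)
  have hmem : ∀ a, b a ∈ Module.End.eigenspace A (pr a).2 ⊓ Module.End.eigenspace B (pr a).1 :=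
    fun a => internal.subordinateOrthonormalBasis_subordinate hdim a fam
  let σ : Fin d → ℂ := fun a => (2:ℂ)⁻¹ * ((pr a).2 + (-Complex.I) * (pr a).1)
  have hTv : ∀ a, T (b a) = σ a • b a := by
    intro a
    have hAv : A (b a) = (pr a).2 • b a :=
      Module.End.mem_eigenspace_iff.mp (Submodule.mem_inf.mp (hmem a)).1
    have hBv : B (b a) = (pr a).1 • b a :=
      Module.End.mem_eigenspace_iff.mp (Submodule.mem_inf.mp (hmem a)).2
    have key : T (b a) = (2:ℂ)⁻¹ • (A (b a) + (-Complex.I) • B (b a)) := by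
      rw [hA, hB]
      simp only [LinearMap.add_apply, LinearMap.smul_apply, smul_smul, LinearMap.sub_apply]
      rw [show (-Complex.I) * Complex.I = 1 by simp [Complex.I_mul_I], one_smul]
      rw [smul_add, smul_sub]
      module
    rw [key, hAv, hBv, smul_smul, ← add_smul, smul_smul]
  have hU1 : (Matrix.of (fun i a => b a i))ᴴ * (Matrix.of (fun i a => b a i)) = 1 := by
    ext a a'
    have := orthonormal_iff_ite.mp b.orthonormal a a'
    simp only [PiLp.inner_apply, RCLike.inner_apply] at this
    simp only [starRingEnd_apply] at this
    rw [Matrix.mul_apply, Matrix.one_apply]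
    simp only [Matrix.conjTranspose_apply, Matrix.of_apply]
    rw [← this]
    exact Finset.sum_congr rfl fun _ _ => mul_comm _ _
  refine ⟨Matrix.of (fun i a => b a i), σ, hU1, ?_⟩
  · have hUU : (Matrix.of (fun i a => b a i)) * (Matrix.of (fun i a => b a i))ᴴ = 1 :=
      mul_eq_one_comm.mp hU1
    have hSU : S * (Matrix.of (fun i a => b a i))
        = (Matrix.of (fun i a => b a i)) * Matrix.diagonal σ := by
      ext i a
      have h := hTv a
      have h2 : S *ᵥ (fun j => b a j) = fun j => σ a * b a j := by
        have := congrArg (fun (x : EuclideanSpace ℂ (Fin d)) => (WithLp.equiv 2 _) x) h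
        ext j
        have hj := congrFun this j
        simpa [hT, Matrix.toEuclideanLin_apply] using hj
      have h3 := congrFun h2 i
      simp only [Matrix.mulVec, dotProduct] at h3
      rw [Matrix.mul_diagonal]
      simp only [Matrix.mul_apply, Matrix.of_apply]
      exact h3.trans (mul_comm _ _)
    calc S = S * 1 := by rw [mul_one]
    _ = S * ((Matrix.of (fun i a => b a i)) * (Matrix.of (fun i a => b a i))ᴴ) := by rw [hUU]
    _ = (S * (Matrix.of (fun i a => b a i))) * (Matrix.of (fun i a => b a i))ᴴ := by
        rw [Matrix.mul_assoc]
    _ = _ := by rw [hSU]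

lemma diagonal_eq_sum_std {d : ℕ} (c : Fin d → ℂ) :
    Matrix.diagonal c = ∑ j, Matrix.single j j (c j) := by
  ext i k
  rw [Matrix.sum_apply]
  by_cases h : i = k
  · subst h
    rw [Matrix.diagonal_apply_eq]
    have h1 : ∀ bb ∈ Finset.univ, bb ≠ i → Matrix.single bb bb (c bb) i i = 0 := by
      intro bb _ hb
      simp [Matrix.single, hb]
    rw [Finset.sum_eq_single i h1 (by simp)]
    simp [Matrix.single]
  · rw [Matrix.diagonal_apply_ne _ h]
    symm
    refine Finset.sum_eq_zero fun bb _ => ?_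
    simp only [Matrix.single, Matrix.of_apply]
    rw [if_neg]
    · rintro ⟨rfl, rfl⟩
      exact h rfl

lemma conj_diag_expand {d : ℕ} (U X : Matrix (Fin d) (Fin d) ℂ) (c : Fin d → ℂ) :
    Xᴴ * (U * Matrix.diagonal c * Uᴴ) * X
      = ∑ j, c j • (Xᴴ * (U * Matrix.single j j 1 * Uᴴ) * X) := by
  rw [diagonal_eq_sum_std]
  have hs : ∀ j : Fin d,
      Matrix.single j j (c j) = c j • Matrix.single j j (1:ℂ) := by
    intro j; rw [Matrix.smul_single]; simp
  simp_rw [hs, Finset.mul_sum, Finset.sum_mul, Matrix.mul_smul, Matrix.smul_mul]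
  rw [Finset.mul_sum, Finset.sum_mul]
  simp_rw [Matrix.mul_smul, Matrix.smul_mul]

lemma blk2_conjTranspose {d : ℕ} (A B C D : Matrix (Fin d) (Fin d) ℂ) :
    (blk2 A B C D)ᴴ = blk2 Aᴴ Cᴴ Bᴴ Dᴴ := by
  ext ⟨i, k⟩ ⟨j, l⟩
  fin_cases i <;> fin_cases j <;>
    simp [blk2, Matrix.conjTranspose_apply]

lemma blk2_mul {d : ℕ} (A B C D A' B' C' D' : Matrix (Fin d) (Fin d) ℂ) :
    blk2 A B C D * blk2 A' B' C' D'
      = blk2 (A*A' + B*C') (A*B' + B*D') (C*A' + D*C') (C*B' + D*D') := by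
  ext ⟨i, k⟩ ⟨j, l⟩
  rw [Matrix.mul_apply]
  rw [Fintype.sum_prod_type]
  rw [Fin.sum_univ_two]
  fin_cases i <;> fin_cases j <;>
    simp [blk2, Matrix.mul_apply, Matrix.add_apply]

lemma blk2_add {d : ℕ} (A B C D A' B' C' D' : Matrix (Fin d) (Fin d) ℂ) :
    blk2 A B C D + blk2 A' B' C' D' = blk2 (A+A') (B+B') (C+C') (D+D') := by
  ext ⟨i, k⟩ ⟨j, l⟩
  fin_cases i <;> fin_cases j <;> simp [blk2]

lemma blk2_sum {d n : ℕ} (A B C D : Fin n → Matrix (Fin d) (Fin d) ℂ) :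
    ∑ j, blk2 (A j) (B j) (C j) (D j)
      = blk2 (∑ j, A j) (∑ j, B j) (∑ j, C j) (∑ j, D j) := by
  ext ⟨i, k⟩ ⟨j, l⟩
  rw [Matrix.sum_apply]
  fin_cases i <;> fin_cases j <;> simp [blk2, Matrix.sum_apply]

lemma kron_blk2 {d : ℕ} (v : Fin 2 → ℂ) (M : Matrix (Fin d) (Fin d) ℂ) :
    Matrix.vecMulVec v (star v) ⊗ₖ M
      = blk2 ((v 0 * star (v 0)) • M) ((v 0 * star (v 1)) • M)
             ((v 1 * star (v 0)) • M) ((v 1 * star (v 1)) • M) := by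
  ext ⟨i, k⟩ ⟨j, l⟩
  fin_cases i <;> fin_cases j <;>
    simp [blk2, Matrix.kroneckerMap_apply, Matrix.vecMulVec_apply, Pi.star_apply]

lemma blk2_congr {d : ℕ} {A B C D A' B' C' D' : Matrix (Fin d) (Fin d) ℂ}
    (h1 : A = A') (h2 : B = B') (h3 : C = C') (h4 : D = D') :
    blk2 A B C D = blk2 A' B' C' D' := by
  rw [h1, h2, h3, h4]

theorem stmt0 {d : ℕ} (X₁ X₂ S : Matrix (Fin d) (Fin d) ℂ)
    (hS : S * Sᴴ = Sᴴ * S) :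
    SepRankOne ((blk2 X₁ (S * X₁) 0 X₂)ᴴ * (blk2 X₁ (S * X₁) 0 X₂)) := by
  classical
  obtain ⟨U, μ, hU, hSeq⟩ := normal_spectral S hS
  have hUU : U * Uᴴ = 1 := mul_eq_one_comm.mp hU
  have cancel : ∀ X : Matrix (Fin d) (Fin d) ℂ, Uᴴ * (U * X) = X := fun X => by
    rw [← Matrix.mul_assoc, hU, one_mul]
  have hSH : Sᴴ = U * Matrix.diagonal (fun j => star (μ j)) * Uᴴ := by
    rw [hSeq]
    rw [Matrix.conjTranspose_mul, Matrix.conjTranspose_mul, Matrix.diagonal_conjTranspose,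
      Matrix.conjTranspose_conjTranspose, Matrix.mul_assoc]
    rfl
  have hSHS : Sᴴ * S = U * Matrix.diagonal (fun j => star (μ j) * μ j) * Uᴴ := by
    rw [hSH, hSeq]
    simp only [Matrix.mul_assoc, cancel]
    rw [← Matrix.mul_assoc (Matrix.diagonal _) (Matrix.diagonal _) Uᴴ,
      Matrix.diagonal_mul_diagonal]
  set E : Fin d → Matrix (Fin d) (Fin d) ℂ := fun j => Matrix.single j j 1 with hE
  have hEH : ∀ j, (E j)ᴴ = E j := by
    intro j
    ext i k
    simp only [hE, Matrix.conjTranspose_apply, Matrix.single, Matrix.of_apply]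
    by_cases h : j = i ∧ j = k
    · obtain ⟨h1, h2⟩ := h; subst h1; subst h2; simp
    · rw [if_neg (by tauto), if_neg (by tauto)]
      simp
  have hEE : ∀ j, E j * E j = E j := by
    intro j
    rw [hE]
    rw [Matrix.single_mul_single_same]
    simp
  have hEpsd : ∀ j, (E j).PosSemidef := by
    intro j
    have : E j = (E j)ᴴ * E j := by rw [hEH, hEE]
    rw [this]
    exact Matrix.posSemidef_conjTranspose_mul_self _
  refine ⟨d + 1, Fin.snoc (fun j => ![1, star (μ j)]) ![0, 1],
    Fin.snoc (fun j => X₁ᴴ * (U * E j * Uᴴ) * X₁) (X₂ᴴ * X₂), ?_, ?_⟩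
  · intro i
    refine Fin.lastCases ?_ ?_ i
    · rw [Fin.snoc_last]
      exact Matrix.posSemidef_conjTranspose_mul_self X₂
    · intro j
      rw [Fin.snoc_castSucc]
      exact ((hEpsd j).mul_mul_conjTranspose_same U).conjTranspose_mul_mul_same X₁
  · rw [Fin.sum_univ_castSucc]
    simp only [Fin.snoc_castSucc, Fin.snoc_last]
    rw [blk2_conjTranspose, blk2_mul]
    simp_rw [kron_blk2]
    rw [blk2_sum, blk2_add]
    simp only [Matrix.cons_val_zero, Matrix.cons_val_one, Matrix.head_cons, star_star,
      star_one, star_zero, one_mul, mul_one, mul_zero, zero_mul, one_smul, zero_smul,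
      add_zero, zero_add, Matrix.conjTranspose_zero, Matrix.mul_zero, Matrix.zero_mul]
    refine blk2_congr ?_ ?_ ?_ ?_
    · have := conj_diag_expand U X₁ (fun _ => (1:ℂ))
      simp only [Matrix.diagonal_one, Matrix.mul_one, one_smul] at this
      rw [hUU] at this
      rw [Matrix.mul_one] at this
      exact this
    · have := conj_diag_expand U X₁ μ
      rw [← hSeq] at this
      rw [← Matrix.mul_assoc, this]
    · have h := conj_diag_expand U X₁ (fun j => star (μ j))
      rw [← hSH] at h
      rw [Matrix.conjTranspose_mul]
      exact h
    · have h := conj_diag_expand U X₁ (fun j => star (μ j) * μ j)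
      rw [← hSHS] at h
      congr 1
      rw [Matrix.conjTranspose_mul, Matrix.mul_assoc X₁ᴴ Sᴴ (S * X₁),
        ← Matrix.mul_assoc Sᴴ S X₁, ← Matrix.mul_assoc]
      exact h
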